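/- For ξ ∈ ℝⁿ, the family of real numbers {⟨ξ,x⟩ − f(x) : x ∈ ℝⁿ} is bounded above if and only if ξ lies in the convex hull of {P_1,…,P_N}. (In other words, the domain of the Legendre transform of f is exactly the convex hull of the points P_i.) -/

import Mathlib

open scoped RealInnerProductSpace

/-- the family `{⟨ξ,x⟩ − f(x) : x ∈ ℝⁿ}` is bounded above iff `ξ`
lies in the convex hull of the points `P_i`; i.e. the domain of the Legendre
transform of `f` is exactly the convex hull of the `P_i`. -/
theorem legendre_domain_eq_convexHull
    (n N : ℕ) (hN : 1 ≤ N)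
    (P : Fin N → EuclideanSpace ℝ (Fin n)) (w : Fin N → ℝ)
    (c : Fin N → ℝ) (hc : ∀ i, c i = -((‖P i‖ ^ 2 - w i) / 2))
    (fi : Fin N → EuclideanSpace ℝ (Fin n) → ℝ)
    (hfi : ∀ i x, fi i x = ⟪x, P i⟫ + c i)
    (f : EuclideanSpace ℝ (Fin n) → ℝ)
    (hf : ∀ x, IsGreatest (Set.range fun i => fi i x) (f x))
    (ξ : EuclideanSpace ℝ (Fin n)) :
    BddAbove (Set.range fun x => ⟪ξ, x⟫ - f x) ↔
      ξ ∈ convexHull ℝ (Set.range P) := by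
  have hle : ∀ i x, fi i x ≤ f x := fun i x => (hf x).2 ⟨i, rfl⟩
  constructor
  · -- bounded above → ξ ∈ convex hull, by contraposition
    intro hbdd
    by_contra hmem
    obtain ⟨l, u, hlu, hξu⟩ := geometric_hahn_banach_closed_point
      (convex_convexHull ℝ (Set.range P)) ((Set.finite_range P).isClosed_convexHull ℝ) hmem
    obtain ⟨M, hM⟩ := hbdd
    obtain ⟨C, hC⟩ := (Set.finite_range c).bddAbove
    have hCi : ∀ i, c i ≤ C := fun i => hC ⟨i, rfl⟩
    set v : EuclideanSpace ℝ (Fin n) := (InnerProductSpace.toDual ℝ _).symm l with hv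
    have hvl : ∀ y, ⟪v, y⟫ = l y := fun y => InnerProductSpace.toDual_symm_apply
    have hpos : 0 < l ξ - u := sub_pos.2 hξu
    set t : ℝ := max 0 ((M + C + 1) / (l ξ - u)) with ht
    have ht0 : 0 ≤ t := le_max_left _ _
    have htbig : M + C + 1 ≤ t * (l ξ - u) := by
      rw [← div_le_iff₀ hpos]
      exact le_max_right _ _
    have hMx := hM ⟨t • v, rfl⟩
    simp only at hMx
    -- f (t • v) ≤ t * u + C
    obtain ⟨i, hi⟩ := (hf (t • v)).1
    have hfv : f (t • v) ≤ t * u + C := by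
      rw [← hi]; simp only [hfi]
      have h1 : ⟪t • v, P i⟫ = t * l (P i) := by
        rw [real_inner_smul_left, hvl]
      have h2 : l (P i) ≤ u := (hlu (P i) (subset_convexHull ℝ _ ⟨i, rfl⟩)).le
      rw [h1]
      exact add_le_add (mul_le_mul_of_nonneg_left h2 ht0) (hCi i)
    have hξv : ⟪ξ, t • v⟫ = t * l ξ := by
      rw [real_inner_smul_right, real_inner_comm, hvl]
    rw [hξv] at hMx
    nlinarith [hMx, hfv, htbig]
  · -- ξ ∈ convex hull → bounded above
    intro hmem
    rw [convexHull_range_eq_exists_affineCombination] at hmem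
    obtain ⟨s, lam, h0, h1, hsum⟩ := hmem
    refine ⟨∑ i ∈ s, lam i * (-(c i)), ?_⟩
    rintro y ⟨x, rfl⟩
    simp only
    have hξ : ξ = ∑ i ∈ s, lam i • P i := by
      rw [← hsum, Finset.affineCombination_eq_linear_combination s P lam h1]
    have hinner : ⟪ξ, x⟫ = ∑ i ∈ s, lam i * ⟪x, P i⟫ := by
      rw [hξ, sum_inner]
      exact Finset.sum_congr rfl fun i _ => by
        rw [real_inner_smul_left, real_inner_comm]
    have hbound : ∀ i ∈ s, lam i * ⟪x, P i⟫ ≤ lam i * (f x - c i) := fun i hi =>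
      mul_le_mul_of_nonneg_left (by have := hle i x; rw [hfi] at this; linarith) (h0 i hi)
    have : ⟪ξ, x⟫ ≤ ∑ i ∈ s, lam i * (f x - c i) := by
      rw [hinner]; exact Finset.sum_le_sum hbound
    have hsplit : ∑ i ∈ s, lam i * (f x - c i)
        = (∑ i ∈ s, lam i) * f x - ∑ i ∈ s, lam i * c i := by
      rw [Finset.sum_mul, ← Finset.sum_sub_distrib]
      exact Finset.sum_congr rfl fun i _ => by ring
    have hneg : ∑ i ∈ s, lam i * (-(c i)) = -(∑ i ∈ s, lam i * c i) := by
      simp [mul_neg]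
    rw [h1, one_mul] at hsplit
    linarith
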